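/- Let A be a commutative ring which is a ℚ-algebra, d a derivation on A, and I an ideal of A which is a differential ideal for d (d(I) ⊆ I). Then the radical √I is also a differential ideal for d, i.e. d(√I) ⊆ √I. -/

import Mathlib

lemma nat_cancel_mem {A : Type*} [CommRing A] [Algebra ℚ A] (I : Ideal A) {n : ℕ}
    (hn : n ≠ 0) {a : A} (h : (n : A) * a ∈ I) : a ∈ I := by
  have key : a = algebraMap ℚ A (1 / n) * ((n : A) * a) := by
    rw [← mul_assoc]
    have : algebraMap ℚ A (1 / n) * (n : A) = 1 := by
      rw [show ((n : A)) = algebraMap ℚ A n by push_cast; simp, ← map_mul]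
      field_simp
      exact map_one _
    rw [this, one_mul]
  rw [key]
  exact I.mul_mem_left _ h

/-- Let `A` be a commutative ring which is a `ℚ`-algebra (characteristic zero), `d` a
derivation on `A`, and `I` a differential ideal for `d`. Then the radical `√I` is also a
differential ideal for `d`. -/
theorem stmt17 {A : Type*} [CommRing A] [Algebra ℚ A] (d : Derivation ℤ A A) (I : Ideal A)
    (hdiff : ∀ x ∈ I, d x ∈ I) :
    ∀ x ∈ I.radical, d x ∈ I.radical := by
  intro x hx
  obtain ⟨n, hxn⟩ := hx
  rcases Nat.eq_zero_or_pos n with rfl | hn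
  · -- then 1 ∈ I, so I = ⊤
    simp only [pow_zero] at hxn
    exact ⟨1, by simpa using I.mul_mem_left (d x) hxn⟩
  -- main claim by induction
  have claim : ∀ k : ℕ, k < n → x ^ (n - 1 - k) * (d x) ^ (2 * k + 1) ∈ I := by
    intro k
    induction k with
    | zero =>
      intro _
      have h1 : d (x ^ n) ∈ I := hdiff _ hxn
      rw [Derivation.leibniz_pow] at h1
      have h2 : (n : A) * (x ^ (n - 1) * (d x) ^ (2 * 0 + 1)) ∈ I := by
        simpa [smul_eq_mul, mul_assoc, Nat.sub_zero] using h1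
      exact nat_cancel_mem I (by omega : n ≠ 0) h2
    | succ k ih =>
      intro hk1
      have hk : k < n := Nat.lt_of_succ_lt hk1
      have hy := ih hk
      set m := n - 1 - k with hm
      have hm0 : m ≠ 0 := by omega
      have hdy : d (x ^ m * (d x) ^ (2 * k + 1)) ∈ I := hdiff _ hy
      rw [Derivation.leibniz, Derivation.leibniz_pow, Derivation.leibniz_pow] at hdy
      -- d y = x^m • ((2k+1) • (dx)^(2k) • d (d x)) + (dx)^(2k+1) • (m • x^(m-1) • d x)
      have hmul : d x * (x ^ m • ((2 * k + 1) • (d x) ^ (2 * k + 1 - 1) • d (d x))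
          + (d x) ^ (2 * k + 1) • (m • x ^ (m - 1) • d x)) ∈ I := I.mul_mem_left _ hdy
      have hterm : ((2 * k + 1 : ℕ) : A) * d (d x) * (x ^ m * (d x) ^ (2 * k + 1)) ∈ I :=
        I.mul_mem_left _ hy
      have hsub : (m : A) * (x ^ (m - 1) * (d x) ^ (2 * (k + 1) + 1)) ∈ I := by
        have := I.sub_mem hmul hterm
        convert this using 1
        simp only [smul_eq_mul, nsmul_eq_mul, Nat.add_sub_cancel]
        have h2 : 2 * (k + 1) + 1 = (2 * k + 1) + 2 := by ring
        rw [h2, pow_add, pow_add]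
        ring
      have := nat_cancel_mem I hm0 hsub
      have hme : m - 1 = n - 1 - (k + 1) := by omega
      rwa [hme] at this
  have hfinal := claim (n - 1) (by omega)
  exact ⟨2 * (n - 1) + 1, by simpa [Nat.sub_self] using hfinal⟩
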